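/- arXiv:2108.11058 — 2 statements merged into one kernel-verified Lean document; each statement's English description precedes it below -/
import Mathlib

section
/- Let A be an admissible sequence with S^n(A) = A (not necessarily of minimal period n), and suppose A is maximal. Let Ã be the period-n sequence obtained from A by flipping the symbol at every position congruent to n−1 modulo n. Then the minimal period of Ã is either n or n/2. -/
/-- Admissible sequences are functions `ℕ → Bool`, with `false = L`, `true = R`.
`shiftSeq k A` is the `k`-fold shift `S^k A`. -/
def shiftSeq (k : ℕ) (A : ℕ → Bool) : ℕ → Bool := fun i => A (i + k)

/-- The block `A_0 ⋯ A_{n-1}` is even: it contains an even number of `R`'s. -/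
def BlockEven (A : ℕ → Bool) (n : ℕ) : Prop :=
  Even ((Finset.range n).filter fun i => A i = true).card

/-- The order on admissible sequences: `A < B` iff at the first index `n` of
disagreement, either `A_0 ⋯ A_{n-1}` is even and `A n = L < R = B n`, or it is
odd and `A n = R > L = B n`. -/
def SeqLT (A B : ℕ → Bool) : Prop :=
  ∃ n : ℕ, (∀ i < n, A i = B i) ∧ A n ≠ B n ∧
    ((BlockEven A n ∧ A n = false ∧ B n = true) ∨
     (¬ BlockEven A n ∧ A n = true ∧ B n = false))

def SeqLE (A B : ℕ → Bool) : Prop := SeqLT A B ∨ A = B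

/-- `A` is maximal: `S^k A ≤ A` for all `k ≥ 0`. -/
def SeqMaximal (A : ℕ → Bool) : Prop := ∀ k : ℕ, SeqLE (shiftSeq k A) A

/-- `A` is periodic of period `n > 0`. -/
def IsPeriodicSeq (A : ℕ → Bool) (n : ℕ) : Prop := 0 < n ∧ ∀ i, A (i + n) = A i

/-- The minimal period of `A` (and `0` if `A` is not periodic). -/
noncomputable def minPer (A : ℕ → Bool) : ℕ := sInf {n : ℕ | IsPeriodicSeq A n}

/-- Flip (`L ↔ R`) the symbol of `A` at every position congruent to `n - 1`
modulo `n`. -/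
def flipAt (n : ℕ) (A : ℕ → Bool) : ℕ → Bool :=
  fun i => if i % n = n - 1 then !(A i) else A i

/-- The map `μ` on periodic admissible sequences: if `n` is the minimal period of
`A` and `m` (with `0 ≤ m ≤ n-1`) is the unique integer such that `S^m A` is
maximal, then `μ A = S^{n-m} B`, where `B` is obtained from `S^m A` by flipping
the symbol at every position congruent to `n - 1` modulo `n`. -/
noncomputable def muSeq (A : ℕ → Bool) : ℕ → Bool :=
  shiftSeq (minPer A - sInf {m : ℕ | SeqMaximal (shiftSeq m A)})
    (flipAt (minPer A)
      (shiftSeq (sInf {m : ℕ | SeqMaximal (shiftSeq m A)}) A))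

/-- The map `ν`: `ν A = μ A` if `per (μ A) = per A`, and `ν A = S^{per A / 2} A`
otherwise. -/
noncomputable def nuSeq (A : ℕ → Bool) : ℕ → Bool :=
  if minPer (muSeq A) = minPer A then muSeq A else shiftSeq (minPer A / 2) A

lemma cnt_split (A : ℕ → Bool) (a b c : ℕ) (h1 : a ≤ b) (h2 : b ≤ c) :
    ((Finset.Ico a c).filter fun i => A i = true).card
      = ((Finset.Ico a b).filter fun i => A i = true).card
        + ((Finset.Ico b c).filter fun i => A i = true).card := by
  rw [← Finset.Ico_union_Ico_eq_Ico h1 h2, Finset.filter_union,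
      Finset.card_union_of_disjoint
        (Finset.disjoint_filter_filter (Finset.Ico_disjoint_Ico_consecutive a b c))]

lemma cnt_succ (A : ℕ → Bool) (a : ℕ) :
    ((Finset.Ico a (a+1)).filter fun i => A i = true).card
      = if A a = true then 1 else 0 := by
  rw [Nat.Ico_succ_singleton, Finset.filter_singleton]
  split <;> simp

lemma cnt_shift (A : ℕ → Bool) (m a b : ℕ)
    (h : ∀ i, a ≤ i → i < b → A (i + m) = A i) :
    ((Finset.Ico a b).filter fun i => A i = true).card
      = ((Finset.Ico (a+m) (b+m)).filter fun i => A i = true).card := by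
  apply Finset.card_bij (fun i _ => i + m)
  · intro x hx
    simp only [Finset.mem_filter, Finset.mem_Ico] at hx ⊢
    exact ⟨⟨by omega, by omega⟩, by rw [h x hx.1.1 hx.1.2]; exact hx.2⟩
  · intro x₁ h₁ x₂ h₂ he; omega
  · intro y hy
    simp only [Finset.mem_filter, Finset.mem_Ico] at hy
    refine ⟨y - m, ?_, by omega⟩
    simp only [Finset.mem_filter, Finset.mem_Ico]
    have h2 : A (y - m + m) = A (y - m) := h (y - m) (by omega) (by omega)
    have h3 : y - m + m = y := by omega
    rw [h3] at h2
    exact ⟨⟨by omega, by omega⟩, by rw [← h2]; exact hy.2⟩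

lemma maxCond (A : ℕ → Bool) (k d : ℕ)
    (hle : SeqLE (shiftSeq k A) A)
    (hagree : ∀ i < d, A (i + k) = A i)
    (hflip : A (d + k) = !A d) :
    (Even (((Finset.range d).filter fun i => A i = true).card) ↔ A d = true) := by
  have hne : A (d + k) ≠ A d := by rw [hflip]; cases A d <;> simp
  rcases hle with h | h
  · obtain ⟨n', hag, hne', hcond⟩ := h
    have hsd : ∀ i, shiftSeq k A i = A (i + k) := fun _ => rfl
    have hd : n' = d := by
      by_contra hne2
      rcases Nat.lt_or_ge n' d with h1 | h1
      · exact hne' (by rw [hsd]; exact hagree n' h1)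
      · have h2 : d < n' := by omega
        exact hne (by have := hag d h2; rw [hsd] at this; exact this)
    subst hd
    have hfe : ((Finset.range n').filter fun i => shiftSeq k A i = true)
        = ((Finset.range n').filter fun i => A i = true) := by
      apply Finset.filter_congr
      intro i hi
      rw [hsd, hagree i (Finset.mem_range.mp hi)]
    have hbe : BlockEven (shiftSeq k A) n'
        ↔ Even (((Finset.range n').filter fun i => A i = true).card) := by
      unfold BlockEven; rw [hfe]
    rcases hcond with ⟨he, hf1, hf2⟩ | ⟨he, hf1, hf2⟩
    · exact iff_of_true (hbe.mp he) hf2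
    · exact iff_of_false (fun h => he (hbe.mpr h)) (by rw [hf2]; simp)
  · exact absurd (congrFun h d) hne

lemma mod_shift (i m n : ℕ) (hm : 0 < m) (hmn : m < n) :
    ((i + m) % n = n - 1 ↔ i % n = n - 1 - m) := by
  have h0 : 0 < n := lt_trans hm hmn
  have h1 : (i + m) % n = (i % n + m) % n := by
    rw [Nat.add_mod, Nat.mod_eq_of_lt hmn]
  have hr : i % n < n := Nat.mod_lt _ h0
  rw [h1]
  rcases Nat.lt_or_ge (i % n + m) n with h | h
  · rw [Nat.mod_eq_of_lt h]; omega
  · have h2 : (i % n + m) % n = i % n + m - n := by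
      rw [Nat.mod_eq_sub_mod h, Nat.mod_eq_of_lt (by omega)]
    rw [h2]; omega

lemma flip_step (A : ℕ → Bool) (n m : ℕ) (hm : 0 < m) (hmn : m < n)
    (hp : ∀ i, flipAt n A (i + m) = flipAt n A i) :
    ∀ i, A (i + m) = if i % n = n - 1 - m ∨ i % n = n - 1 then !(A i) else A i := by
  intro i
  have hmod := mod_shift i m n hm hmn
  have h := hp i
  unfold flipAt at h
  by_cases h1 : i % n = n - 1 - m
  · have h1' : i % n ≠ n - 1 := by omega
    rw [if_pos (Or.inl h1)]
    rw [if_pos (hmod.mpr h1), if_neg h1'] at h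
    rw [← h, Bool.not_not]
  · by_cases h2 : i % n = n - 1
    · have h2' : (i + m) % n ≠ n - 1 := fun hc => h1 (hmod.mp hc)
      rw [if_pos (Or.inr h2)]
      rw [if_neg h2', if_pos h2] at h
      exact h
    · rw [if_neg (by tauto)]
      rw [if_neg (fun hc => h1 (hmod.mp hc)), if_neg h2] at h
      exact h

lemma per_mul {B : ℕ → Bool} {m : ℕ} (hp : ∀ i, B (i + m) = B i) :
    ∀ k i, B (i + k * m) = B i := by
  intro k
  induction k with
  | zero => simp
  | succ k ih =>
    intro i
    have h : i + (k + 1) * m = (i + k * m) + m := by ring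
    rw [h, hp, ih]

/-- Let `A` be a maximal admissible sequence with `S^n A = A` (not
necessarily of minimal period `n`), and let `Ã` be obtained from `A` by flipping
the symbol at every position congruent to `n - 1` modulo `n`.  Then the minimal
period of `Ã` is either `n` or `n/2`. -/
theorem stmt6 (A : ℕ → Bool) (n : ℕ) (hn : 0 < n) (hper : ∀ i, A (i + n) = A i)
    (hmax : SeqMaximal A) :
    minPer (flipAt n A) = n ∨ 2 * minPer (flipAt n A) = n := by
  have hAn : IsPeriodicSeq (flipAt n A) n :=
    ⟨hn, fun i => by simp [flipAt, Nat.add_mod_right, hper i]⟩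
  set m := minPer (flipAt n A) with hmdef
  have hns : n ∈ {k : ℕ | IsPeriodicSeq (flipAt n A) k} := hAn
  have hmS : minPer (flipAt n A) = sInf {k : ℕ | IsPeriodicSeq (flipAt n A) k} := rfl
  have hmem : IsPeriodicSeq (flipAt n A) m := by
    have h := Nat.sInf_mem (⟨n, hns⟩ : {k : ℕ | IsPeriodicSeq (flipAt n A) k}.Nonempty)
    rw [hmdef, hmS]
    exact h
  have hm0 : 0 < m := hmem.1
  have hmp : ∀ i, flipAt n A (i + m) = flipAt n A i := hmem.2
  have hmn : m ≤ n := by rw [hmdef, hmS]; exact Nat.sInf_le hns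
  have hdvd : m ∣ n := by
    rcases Nat.eq_zero_or_pos (n % m) with h | h
    · exact Nat.dvd_of_mod_eq_zero h
    · exfalso
      have hper' : IsPeriodicSeq (flipAt n A) (n % m) := by
        refine ⟨h, fun i => ?_⟩
        have h1 := per_mul hmp (n / m) (i + n % m)
        have h2 : i + n % m + n / m * m = i + n := by
          have := Nat.mod_add_div' n m; omega
        rw [h2] at h1
        rw [← h1, hAn.2]
      have h3 : m ≤ n % m := by
        rw [hmdef, hmS]
        exact Nat.sInf_le (show n % m ∈ {k : ℕ | IsPeriodicSeq (flipAt n A) k} from hper')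
      have h4 : n % m < m := Nat.mod_lt n hm0
      omega
  obtain ⟨q, hq⟩ := hdvd
  match q, hq with
  | 0, hq => omega
  | 1, hq => left; omega
  | 2, hq => right; omega
  | (r+3), hq =>
    exfalso
    -- basic arithmetic facts
    have hnr : n = r * m + 3 * m := by rw [hq]; ring
    have hmltn : m < n := by omega
    have hstep := flip_step A n m hm0 hmltn hmp
    -- d1 := n - 1 - m, d2 := n - 1 - 2*m
    -- (1) agreement below d1 under shift by m
    have ha1 : ∀ i < n - 1 - m, A (i + m) = A i := by
      intro i hi
      rw [hstep i, if_neg]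
      rw [Nat.mod_eq_of_lt (show i < n by omega)]
      omega
    -- (2) flip at d1
    have hflip1 : A ((n - 1 - m) + m) = !A (n - 1 - m) := by
      rw [hstep, if_pos]
      left
      rw [Nat.mod_eq_of_lt (show n - 1 - m < n by omega)]
    -- value equality at d2 and d1
    have hv21 : A (n - 1 - m) = A (n - 1 - 2*m) := by
      have h1 : A ((n - 1 - 2*m) + m) = A (n - 1 - 2*m) := ha1 _ (by omega)
      rw [show n - 1 - 2*m + m = n - 1 - m by omega] at h1
      exact h1
    -- (4) agreement below d2 under shift by 2m
    have ha2 : ∀ i < n - 1 - 2*m, A (i + 2*m) = A i := by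
      intro i hi
      have h1 : A (i + m) = A i := ha1 i (by omega)
      have h2 : A ((i + m) + m) = A (i + m) := ha1 (i + m) (by omega)
      rw [show i + 2*m = i + m + m by ring, h2, h1]
    -- (5) flip at d2 under shift by 2m
    have hflip2 : A ((n - 1 - 2*m) + 2*m) = !A (n - 1 - 2*m) := by
      have h1 : A ((n - 1 - 2*m) + 2*m) = !A (n - 1 - m) := by
        rw [show (n - 1 - 2*m) + 2*m = (n - 1 - m) + m by omega, hflip1]
      rw [h1, hv21]
    -- (7) agreement below m-1 under shift by n-m
    have ha3 : ∀ i < m - 1, A (i + (n - m)) = A i := by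
      intro i hi
      have h1 := hstep (i + (n - m))
      rw [if_neg, show i + (n - m) + m = i + n by omega, hper i] at h1
      · exact h1.symm
      · rw [Nat.mod_eq_of_lt (show i + (n - m) < n by omega)]
        omega
    -- (8) flip at m-1 under shift by n-m
    have hflip3 : A ((m - 1) + (n - m)) = !A (m - 1) := by
      have h1 := hstep (n - 1)
      rw [if_pos (Or.inr (Nat.mod_eq_of_lt (show n - 1 < n by omega))),
          show n - 1 + m = (m - 1) + n by omega, hper (m - 1)] at h1
      -- h1 : A (m - 1) = !A (n - 1)
      have h2 : A (n - 1) = !A (m - 1) := by rw [h1, Bool.not_not]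
      rw [show (m - 1) + (n - m) = n - 1 by omega, h2]
    -- the three parity conditions from maximality
    have C1 := maxCond A m (n - 1 - m) (hmax m) ha1 hflip1
    have C2 := maxCond A (2*m) (n - 1 - 2*m) (hmax (2*m)) ha2 hflip2
    have C3 := maxCond A (n - m) (m - 1) (hmax (n - m)) ha3 hflip3
    -- (10) chain : A (m-1) = A (d2)
    have chain : ∀ k, m - 1 + k * m ≤ n - 1 - 2*m → A (m - 1 + k * m) = A (m - 1) := by
      intro k
      induction k with
      | zero => simp
      | succ k ih =>
        intro hk
        have hkm : (k + 1) * m = k * m + m := by ring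
        have h2 : m - 1 + (k + 1) * m = (m - 1 + k * m) + m := by omega
        rw [h2, ha1 _ (by omega), ih (by omega)]
    have hvm : A (n - 1 - 2*m) = A (m - 1) := by
      have h1 := chain r (by omega)
      rw [show m - 1 + r * m = n - 1 - 2*m by omega] at h1
      exact h1
    -- counting identities
    have hE4 : ((Finset.Ico (n - 1 - 2*m) (n - 1 - m)).filter fun i => A i = true).card
        = ((Finset.Ico (n - 1 - m) (n - 1)).filter fun i => A i = true).card := by
      have := cnt_shift A m (n - 1 - 2*m) (n - 1 - m) (fun i h1 h2 => ha1 i h2)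
      rw [show n - 1 - 2*m + m = n - 1 - m by omega,
          show n - 1 - m + m = n - 1 by omega] at this
      exact this
    have hE5 : ((Finset.Ico 0 (n - 1 - m)).filter fun i => A i = true).card
        = ((Finset.Ico m (n - 1)).filter fun i => A i = true).card := by
      have := cnt_shift A m 0 (n - 1 - m) (fun i h1 h2 => ha1 i h2)
      rw [show 0 + m = m by omega, show n - 1 - m + m = n - 1 by omega] at this
      exact this
    have hs1 := cnt_split A 0 (n - 1 - m) (n - 1) (by omega) (by omega)
    have hs0 := cnt_split A 0 (n - 1 - 2*m) (n - 1 - m) (by omega) (by omega)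
    have hs2 := cnt_split A 0 m (n - 1) (by omega) (by omega)
    have hs3 := cnt_split A 0 (m - 1) m (by omega) (by omega)
    have hs4 : ((Finset.Ico (m - 1) m).filter fun i => A i = true).card
        = if A (m - 1) = true then 1 else 0 := by
      have := cnt_succ A (m - 1)
      rw [show m - 1 + 1 = m by omega] at this
      exact this
    -- convert range to Ico in C1, C2, C3
    rw [Finset.range_eq_Ico] at C1 C2 C3
    rw [Nat.even_iff] at C1 C2 C3
    -- abbreviations
    set x1 := ((Finset.Ico 0 (n - 1 - m)).filter fun i => A i = true).card with hx1
    set x2 := ((Finset.Ico 0 (n - 1 - 2*m)).filter fun i => A i = true).card with hx2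
    set u := ((Finset.Ico 0 (m - 1)).filter fun i => A i = true).card with hu
    set t := ((Finset.Ico 0 (n - 1)).filter fun i => A i = true).card with ht
    set w := ((Finset.Ico (n - 1 - 2*m) (n - 1 - m)).filter fun i => A i = true).card with hw
    -- final parity contradiction
    cases hval : A (n - 1 - m) with
    | true =>
      rw [hval] at C1
      rw [← hv21, hval] at C2
      rw [← hvm, ← hv21, hval] at C3
      have e1 : x1 % 2 = 0 := C1.mpr rfl
      have e2 : x2 % 2 = 0 := C2.mpr rfl
      have e3 : u % 2 = 0 := C3.mpr rfl
      have hAm : A (m - 1) = true := by rw [← hvm, ← hv21]; exact hval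
      rw [hAm, if_pos rfl] at hs4
      omega
    | false =>
      rw [hval] at C1
      rw [← hv21, hval] at C2
      rw [← hvm, ← hv21, hval] at C3
      have e1 : x1 % 2 = 1 := by
        rcases Nat.mod_two_eq_zero_or_one x1 with h | h
        · exact absurd (C1.mp h) (by simp)
        · exact h
      have e2 : x2 % 2 = 1 := by
        rcases Nat.mod_two_eq_zero_or_one x2 with h | h
        · exact absurd (C2.mp h) (by simp)
        · exact h
      have e3 : u % 2 = 1 := by
        rcases Nat.mod_two_eq_zero_or_one u with h | h
        · exact absurd (C3.mp h) (by simp)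
        · exact h
      have hAm : A (m - 1) = false := by rw [← hvm, ← hv21]; exact hval
      rw [hAm] at hs4
      simp only [Bool.false_eq_true, if_false] at hs4
      omega
end

section
/- Let A be an admissible sequence with S^n(A) = A (not necessarily of minimal period n), and suppose A is maximal. Let Ã be the period-n sequence obtained from A by flipping the symbol at every position congruent to n−1 modulo n. Then either the minimal period of A is n or the minimal period of Ã is n. -/

lemma per_mul' (A : ℕ → Bool) (d : ℕ) (h : ∀ i, A (i + d) = A i) :
    ∀ q i, A (i + q * d) = A i := by
  intro q
  induction q with
  | zero => intro i; simp
  | succ q ih =>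
    intro i
    have e : i + (q + 1) * d = (i + q * d) + d := by ring
    rw [e, h, ih]

lemma mod_per' (A : ℕ → Bool) (d p : ℕ) (hd : ∀ i, A (i + d) = A i)
    (hp : ∀ i, A (i + p) = A i) : ∀ i, A (i + p % d) = A i := by
  intro i
  have h1 : i + p = (i + p % d) + (p / d) * d := by
    have := Nat.mod_add_div' p d; omega
  have h2 := per_mul' A d hd (p / d) (i + p % d)
  rw [← h1, hp] at h2
  exact h2.symm

lemma minPer_dvd' (A : ℕ → Bool) (p : ℕ) (hp : IsPeriodicSeq A p) : minPer A ∣ p := by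
  have hne : {k : ℕ | IsPeriodicSeq A k}.Nonempty := ⟨p, hp⟩
  have hmem : IsPeriodicSeq A (minPer A) := Nat.sInf_mem hne
  obtain ⟨hd0, hdper⟩ := hmem
  by_cases hr : p % minPer A = 0
  · exact Nat.dvd_of_mod_eq_zero hr
  · exfalso
    have hrper : IsPeriodicSeq A (p % minPer A) :=
      ⟨Nat.pos_of_ne_zero hr, mod_per' A (minPer A) p hdper hp.2⟩
    have h1 : minPer A ≤ p % minPer A := Nat.sInf_le hrper
    have h2 : p % minPer A < minPer A := Nat.mod_lt _ hd0
    omega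

lemma cancel_mod' (n i a b : ℕ) (h : (i + a) % n = (i + b) % n) : a % n = b % n :=
  Nat.ModEq.add_left_cancel' i h

/-- Let `A` be a maximal admissible sequence with `S^n A = A` (not
necessarily of minimal period `n`), and let `Ã` be obtained from `A` by flipping
the symbol at every position congruent to `n - 1` modulo `n`.  Then either the
minimal period of `A` is `n` or the minimal period of `Ã` is `n`. -/
theorem stmt7 (A : ℕ → Bool) (n : ℕ) (hn : 0 < n) (hper : ∀ i, A (i + n) = A i)
    (hmax : SeqMaximal A) :
    minPer A = n ∨ minPer (flipAt n A) = n := by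
  have hA : IsPeriodicSeq A n := ⟨hn, hper⟩
  have hneA : {k : ℕ | IsPeriodicSeq A k}.Nonempty := ⟨n, hA⟩
  have hdmem : IsPeriodicSeq A (minPer A) := Nat.sInf_mem hneA
  obtain ⟨hd0, hdper⟩ := hdmem
  set d := minPer A with hdd
  have hdn : d ∣ n := minPer_dvd' A n hA
  by_cases hdn' : d = n
  · exact Or.inl hdn'
  right
  have hdltn : d < n := lt_of_le_of_ne (Nat.le_of_dvd hn hdn) hdn'
  set B := flipAt n A with hB
  have hBn : IsPeriodicSeq B n := by
    refine ⟨hn, fun i => ?_⟩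
    show (if (i + n) % n = n - 1 then !(A (i + n)) else A (i + n)) =
      (if i % n = n - 1 then !(A i) else A i)
    rw [Nat.add_mod_right, hper]
  have hneB : {k : ℕ | IsPeriodicSeq B k}.Nonempty := ⟨n, hBn⟩
  have hmmem : IsPeriodicSeq B (minPer B) := Nat.sInf_mem hneB
  obtain ⟨hm0, hmper⟩ := hmmem
  set m := minPer B with hmm
  have hmn : m ∣ n := minPer_dvd' B n hBn
  by_cases hmn' : m = n
  · exact hmn'
  exfalso
  have hmltn : m < n := lt_of_le_of_ne (Nat.le_of_dvd hn hmn) hmn'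
  have hBgood : ∀ i, i % n ≠ n - 1 → B i = A i := fun i h => if_neg h
  have hBbad : ∀ i, i % n = n - 1 → B i = !(A i) := fun i h => if_pos h
  set r := m % d with hrr
  have key : ∀ i, i % n ≠ n - 1 → (i + m) % n ≠ n - 1 → A (i + m) = A i := by
    intro i h1 h2
    have h3 := hmper i
    rwa [hBgood _ h2, hBgood _ h1] at h3
  by_cases hr0 : r = 0
  · have hdm : d ∣ m := Nat.dvd_of_mod_eq_zero hr0
    have hAm : ∀ i, A (i + m) = A i := by
      intro i
      obtain ⟨q, hq⟩ := hdm
      have e : i + m = i + q * d := by rw [hq]; ring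
      rw [e]
      exact per_mul' A d hdper q i
    have h1 : (n - 1) % n = n - 1 := Nat.mod_eq_of_lt (by omega)
    have h2 : (n - 1 + m) % n = m - 1 := by
      have e : n - 1 + m = m - 1 + n := by omega
      rw [e, Nat.add_mod_right]
      exact Nat.mod_eq_of_lt (by omega)
    have hb := hmper (n - 1)
    rw [hBgood _ (by rw [h2]; omega), hBbad _ h1, hAm] at hb
    exact (Bool.eq_not_self _).mp hb
  · have hrd : r < d := Nat.mod_lt _ hd0
    have hgoodr : ∀ i, i % n ≠ n - 1 → (i + m) % n ≠ n - 1 → A (i + r) = A i := by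
      intro i h1 h2
      have hm' : i + m = (i + r) + (m / d) * d := by
        have := Nat.mod_add_div' m d; omega
      have h3 := key i h1 h2
      rw [hm', per_mul' A d hdper] at h3
      exact h3
    have hndd : ¬ (n ∣ d) := fun h => absurd (Nat.le_of_dvd hd0 h) (by omega)
    have hdvm : ¬ (d ∣ m) := fun h => hr0 (Nat.mod_eq_zero_of_dvd h)
    have hAr : ∀ i, A (i + r) = A i := by
      intro i
      by_cases hg : i % n ≠ n - 1 ∧ (i + m) % n ≠ n - 1
      · exact hgoodr i hg.1 hg.2
      · have hbad : i % n = n - 1 ∨ (i + m) % n = n - 1 := by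
          by_contra hc; push_neg at hc; exact hg ⟨hc.1, hc.2⟩
        have hg1 : (i + d) % n ≠ n - 1 := by
          intro hc
          rcases hbad with h | h
          · have h4 : d % n = 0 % n := cancel_mod' n i d 0 (by simpa using hc.trans h.symm)
            exact hndd (Nat.dvd_of_mod_eq_zero (by simpa using h4))
          · have h4 : d % n = m % n := cancel_mod' n i d m (hc.trans h.symm)
            rw [Nat.mod_eq_of_lt hdltn, Nat.mod_eq_of_lt hmltn] at h4
            exact hdvm (h4 ▸ dvd_refl d)
        have hg2 : (i + d + m) % n ≠ n - 1 := by
          intro hc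
          have e : i + d + m = i + (d + m) := by ring
          rw [e] at hc
          rcases hbad with h | h
          · have h4 : (d + m) % n = 0 % n :=
              cancel_mod' n i (d + m) 0 (by simpa using hc.trans h.symm)
            have h5 : n ∣ d + m := Nat.dvd_of_mod_eq_zero (by simpa using h4)
            exact hdvm ((Nat.dvd_add_right (dvd_refl d)).mp (hdn.trans h5))
          · have h4 : (d + m) % n = m % n := by
              refine cancel_mod' n i (d + m) m (hc.trans h.symm)
            have h5 : d % n = 0 % n := cancel_mod' n m d 0 (by
              have e1 : m + d = d + m := by ring
              have e2 : m + 0 = m := by ring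
              rw [e1, e2]; exact h4)
            exact hndd (Nat.dvd_of_mod_eq_zero (by simpa using h5))
        have e1 := hgoodr (i + d) hg1 hg2
        have e2 : i + d + r = (i + r) + d := by ring
        rw [e2, hdper (i + r), hdper i] at e1
        exact e1
    have hrper : IsPeriodicSeq A r := ⟨Nat.pos_of_ne_zero hr0, hAr⟩
    have hle : minPer A ≤ r := Nat.sInf_le hrper
    omega
end
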